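/- Let u_1,…,u_n, v_1,…,v_n ∈ ℤ^n with ⟨u_i, v_j⟩ = δ_{ij}, let p_1,…,p_k, q_{k+1},…,q_n ∈ ℤ^n with ⟨p_l, q_i⟩ = 0 for all l, i, let a ∈ ℝ^n and κ ∈ ℝ^n, and set L_j(ξ) = ⟨u_j, ξ⟩ − κ_j, I⁺_i = {j : ⟨u_j,q_i⟩ ≥ 0}, I⁻_i = {j : ⟨u_j,q_i⟩ ≤ 0}. Define f_i : ℂ^n → ℂ by f_i(z) = ∏_{j∈I⁺_i} z_j^{⟨u_j,q_i⟩} − e^{⟨a,q_i⟩} ∏_{j∈I⁻_i} z_j^{−⟨u_j,q_i⟩} and g_i : ℝ^n → ℝ by g_i(ξ) = ∏_{j∈I⁺_i} (e·L_j(ξ))^{⟨u_j,q_i⟩} − e^{⟨a,q_i⟩} ∏_{j∈I⁻_i} (e·L_j(ξ))^{−⟨u_j,q_i⟩} (i = k+1,…,n), and let Df(z) and Dg(ξ) be the complex, resp. real, (n−k)×n Jacobian matrices. Let C_λ(V) ⊂ ℂ^n be the image of w ↦ (exp(⟨a,v_i⟩ + ∑_l ⟨p_l,v_i⟩ w_l))_{i=1}^n,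 w ∈ ℂ^k. Then for every z in the topological closure of C_λ(V) in ℂ^n and every ξ ∈ ℝ^n satisfying |z_j| = e·L_j(ξ) for all j = 1,…,n, the rank over ℂ of Df(z) equals the rank over ℝ of Dg(ξ). -/

import Mathlib

open Finset


-- ===== Auxiliary definitions and lemmas =====

noncomputable def dent {R : Type*} [CommRing R] {n : ℕ} (S : Finset (Fin n)) (e : Fin n → ℕ)
    (x : Fin n → R) (j : Fin n) : R :=
  if j ∈ S then (∏ j' ∈ S.erase j, x j' ^ e j') * (e j * x j ^ (e j - 1)) else 0

lemma aux_prod_pow_hasFDerivAt {𝕜 : Type*} [NontriviallyNormedField 𝕜] {E : Type*}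
    [NormedAddCommGroup E] [NormedSpace 𝕜 E] {ι : Type*} [DecidableEq ι]
    (S : Finset ι) (e : ι → ℕ) (φ : ι → E → 𝕜) (φ' : ι → E →L[𝕜] 𝕜) (x : E)
    (h : ∀ j ∈ S, HasFDerivAt (φ j) (φ' j) x) :
    HasFDerivAt (fun y => ∏ j ∈ S, φ j y ^ e j)
      (∑ j ∈ S, (∏ j' ∈ S.erase j, φ j' x ^ e j') • (((e j : 𝕜) * φ j x ^ (e j - 1)) • φ' j)) x :=
  HasFDerivAt.finset_prod fun j hj => (hasDerivAt_pow (e j) (φ j x)).comp_hasFDerivAt x (h j hj)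

lemma aux_eval_sum {𝕜 : Type*} [NontriviallyNormedField 𝕜] {n : ℕ} (S : Finset (Fin n))
    (c d : Fin n → 𝕜) (j : Fin n) :
    (∑ j' ∈ S, c j' • (d j' • (ContinuousLinearMap.proj j' : (Fin n → 𝕜) →L[𝕜] 𝕜)))
      (Pi.single j 1) = if j ∈ S then c j * d j else 0 := by
  rw [ContinuousLinearMap.sum_apply]
  simp only [ContinuousLinearMap.smul_apply, ContinuousLinearMap.proj_apply]
  simp only [Pi.single_apply, smul_eq_mul, mul_ite, mul_one, mul_zero]
  rw [Finset.sum_ite_eq' S j (fun j' => c j' * d j')]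

lemma aux_entry_f {𝕜 : Type*} [NontriviallyNormedField 𝕜] {n : ℕ}
    (Sp Sm : Finset (Fin n)) (ep em : Fin n → ℕ) (c : 𝕜) (z : Fin n → 𝕜) (j : Fin n) :
    fderiv 𝕜 (fun y : Fin n → 𝕜 => (∏ j' ∈ Sp, y j' ^ ep j') - c * ∏ j' ∈ Sm, y j' ^ em j')
      z (Pi.single j 1) = dent Sp ep z j - c * dent Sm em z j := by
  have h1 : HasFDerivAt (fun y : Fin n → 𝕜 => ∏ j' ∈ Sp, y j' ^ ep j')
      (∑ j' ∈ Sp, (∏ j'' ∈ Sp.erase j', z j'' ^ ep j'') •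
        (((ep j' : 𝕜) * z j' ^ (ep j' - 1)) • ContinuousLinearMap.proj j')) z :=
    aux_prod_pow_hasFDerivAt Sp ep (fun j' y => y j') (fun j' => ContinuousLinearMap.proj j') z
      (fun j' _ => by exact (ContinuousLinearMap.proj j' : (Fin n → 𝕜) →L[𝕜] 𝕜).hasFDerivAt)
  have h2 : HasFDerivAt (fun y : Fin n → 𝕜 => ∏ j' ∈ Sm, y j' ^ em j')
      (∑ j' ∈ Sm, (∏ j'' ∈ Sm.erase j', z j'' ^ em j'') •
        (((em j' : 𝕜) * z j' ^ (em j' - 1)) • ContinuousLinearMap.proj j')) z :=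
    aux_prod_pow_hasFDerivAt Sm em (fun j' y => y j') (fun j' => ContinuousLinearMap.proj j') z
      (fun j' _ => by exact (ContinuousLinearMap.proj j' : (Fin n → 𝕜) →L[𝕜] 𝕜).hasFDerivAt)
  have h3 : HasFDerivAt (fun y : Fin n → 𝕜 => (∏ j' ∈ Sp, y j' ^ ep j') - c * ∏ j' ∈ Sm, y j' ^ em j')
      _ z := h1.sub (h2.const_mul c)
  rw [h3.fderiv]
  rw [ContinuousLinearMap.sub_apply, ContinuousLinearMap.smul_apply, aux_eval_sum, aux_eval_sum]
  unfold dent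
  simp [smul_eq_mul, mul_ite, mul_zero]

lemma aux_entry_g {n : ℕ} (Sp Sm : Finset (Fin n)) (ep em : Fin n → ℕ) (c : ℝ)
    (w : Fin n → Fin n → ℝ) (κ : Fin n → ℝ) (ξ : Fin n → ℝ) (m : Fin n) :
    fderiv ℝ (fun y : Fin n → ℝ =>
        (∏ j' ∈ Sp, (Real.exp 1 * ((∑ m', w j' m' * y m') - κ j')) ^ ep j')
        - c * ∏ j' ∈ Sm, (Real.exp 1 * ((∑ m', w j' m' * y m') - κ j')) ^ em j')
      ξ (Pi.single m 1)
      = ∑ j', (dent Sp ep (fun j'' => Real.exp 1 * ((∑ m', w j'' m' * ξ m') - κ j'')) j'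
          - c * dent Sm em (fun j'' => Real.exp 1 * ((∑ m', w j'' m' * ξ m') - κ j'')) j')
          * (Real.exp 1 * w j' m) := by
  set x : Fin n → ℝ := fun j'' => Real.exp 1 * ((∑ m', w j'' m' * ξ m') - κ j'') with hx
  set ℓ : Fin n → (Fin n → ℝ) →L[ℝ] ℝ :=
    fun j' => ∑ m', (Real.exp 1 * w j' m') • ContinuousLinearMap.proj m' with hℓ
  have hφ : ∀ j' : Fin n, HasFDerivAt
      (fun y : Fin n → ℝ => Real.exp 1 * ((∑ m', w j' m' * y m') - κ j')) (ℓ j') ξ := by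
    intro j'
    have hc0 : HasFDerivAt (fun y : Fin n → ℝ => (∑ m', w j' m' * y m') - κ j')
        (∑ m', (w j' m' : ℝ) • (ContinuousLinearMap.proj m' : (Fin n → ℝ) →L[ℝ] ℝ)) ξ := by
      have := ((∑ m', (w j' m' : ℝ) • (ContinuousLinearMap.proj m' :
        (Fin n → ℝ) →L[ℝ] ℝ))).hasFDerivAt (x := ξ)
      have heq : ⇑(∑ m', (w j' m' : ℝ) • (ContinuousLinearMap.proj m' :
          (Fin n → ℝ) →L[ℝ] ℝ)) = fun y : Fin n → ℝ => ∑ m', w j' m' * y m' := by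
        funext y
        simp [ContinuousLinearMap.sum_apply]
      rw [heq] at this
      exact this.sub_const (κ j')
    have := hc0.const_mul (Real.exp 1)
    refine this.congr_fderiv ?_
    rw [hℓ]
    ext y
    simp [ContinuousLinearMap.sum_apply, Finset.smul_sum, smul_smul]
  have h1 := aux_prod_pow_hasFDerivAt Sp ep _ ℓ ξ (fun j' _ => hφ j')
  have h2 := aux_prod_pow_hasFDerivAt Sm em _ ℓ ξ (fun j' _ => hφ j')
  have h3 : HasFDerivAt (fun y : Fin n → ℝ =>
        (∏ j' ∈ Sp, (Real.exp 1 * ((∑ m', w j' m' * y m') - κ j')) ^ ep j')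
        - c * ∏ j' ∈ Sm, (Real.exp 1 * ((∑ m', w j' m' * y m') - κ j')) ^ em j') _ ξ :=
    h1.sub (h2.const_mul c)
  rw [h3.fderiv]
  rw [ContinuousLinearMap.sub_apply, ContinuousLinearMap.smul_apply]
  have hℓeval : ∀ j', ℓ j' (Pi.single m 1) = Real.exp 1 * w j' m := by
    intro j'
    rw [hℓ]
    simp only [ContinuousLinearMap.sum_apply, ContinuousLinearMap.smul_apply,
      ContinuousLinearMap.proj_apply, Pi.single_apply, smul_eq_mul, mul_ite, mul_one, mul_zero]
    rw [Finset.sum_ite_eq' Finset.univ m (fun m' => Real.exp 1 * w j' m')]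
    simp
  have key : ∀ (S : Finset (Fin n)) (e : Fin n → ℕ),
      ((∑ j' ∈ S, (∏ j'' ∈ S.erase j', x j'' ^ e j'') •
        (((e j' : ℝ) * x j' ^ (e j' - 1)) • ℓ j')) (Pi.single m 1))
      = ∑ j', dent S e x j' * (Real.exp 1 * w j' m) := by
    intro S e
    rw [ContinuousLinearMap.sum_apply]
    rw [← Finset.sum_subset (Finset.subset_univ S)
      (fun j' _ hj' => by unfold dent; simp [hj'])]
    apply Finset.sum_congr rfl
    intro j' hj'
    simp only [ContinuousLinearMap.smul_apply, smul_eq_mul, hℓeval]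
    unfold dent
    simp only [hj', if_true]
    ring
  rw [key Sp ep, key Sm em, smul_eq_mul, Finset.mul_sum, ← Finset.sum_sub_distrib]
  apply Finset.sum_congr rfl
  intro j' _
  ring

lemma dent_mul {n : ℕ} (S : Finset (Fin n)) (e : Fin n → ℕ) (t x : Fin n → ℂ)
    (ht : ∀ j, t j ≠ 0) (j : Fin n) :
    dent S e (fun j' => t j' * x j') j = (∏ j' ∈ S, t j' ^ e j') * (t j)⁻¹ * dent S e x j := by
  unfold dent
  by_cases hj : j ∈ S
  · simp only [hj, if_true]
    rcases Nat.eq_zero_or_pos (e j) with h0 | h0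
    · simp [h0]
    · rw [← Finset.prod_erase_mul S _ hj]
      have hpow : t j ^ e j = t j ^ (e j - 1) * t j := by
        rw [← pow_succ, Nat.sub_add_cancel h0]
      rw [hpow]
      simp only [mul_pow, Finset.prod_mul_distrib]
      field_simp [ht j]
  · simp [hj]

lemma dent_map {n : ℕ} (S : Finset (Fin n)) (e : Fin n → ℕ) (x : Fin n → ℝ) (j : Fin n) :
    ((dent S e x j : ℝ) : ℂ) = dent S e (fun j' => (x j' : ℂ)) j := by
  unfold dent
  split <;> push_cast <;> ring

lemma rank_diag_mul_mul_diag {m c : ℕ} (T : Fin m → ℂ) (t : Fin c → ℂ)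
    (hT : ∀ i, T i ≠ 0) (ht : ∀ j, t j ≠ 0) (M : Matrix (Fin m) (Fin c) ℂ) :
    (Matrix.diagonal T * M * Matrix.diagonal t).rank = M.rank := by
  rw [Matrix.rank_mul_eq_left_of_isUnit_det]
  · rw [Matrix.rank_mul_eq_right_of_isUnit_det]
    rw [Matrix.det_diagonal]
    exact (Finset.prod_ne_zero_iff.2 fun i _ => hT i).isUnit
  · rw [Matrix.det_diagonal]
    exact (Finset.prod_ne_zero_iff.2 fun j _ => ht j).isUnit

noncomputable def iotaC (m : ℕ) : (Fin m → ℝ) →ₗ[ℝ] (Fin m → ℂ) where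
  toFun v := fun i => (v i : ℂ)
  map_add' x y := by funext i; push_cast; simp
  map_smul' r x := by funext i; simp [Complex.real_smul]

lemma iotaC_injective (m : ℕ) : Function.Injective (iotaC m) := by
  intro x y h
  funext i
  exact Complex.ofReal_injective (congrFun h i)

lemma mem_span_iotaC {m : ℕ} (s : Set (Fin m → ℝ)) (w : Fin m → ℝ)
    (hw : w ∈ Submodule.span ℝ s) : iotaC m w ∈ Submodule.span ℂ (iotaC m '' s) := by
  induction hw using Submodule.span_induction with
  | mem x hx => exact Submodule.subset_span ⟨x, hx, rfl⟩
  | zero => simp only [map_zero]; exact Submodule.zero_mem _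
  | add x y _ _ hx hy => rw [map_add]; exact Submodule.add_mem _ hx hy
  | smul r x _ hx => rw [map_smul]; exact Submodule.smul_mem _ (r : ℂ) hx

lemma linIndep_iotaC {m : ℕ} (b : Set (Fin m → ℝ)) [Fintype b]
    (hb : LinearIndependent ℝ (Subtype.val : b → (Fin m → ℝ))) :
    LinearIndependent ℂ (fun x : b => iotaC m x.val) := by
  rw [Fintype.linearIndependent_iff]
  intro g hg x
  rw [Fintype.linearIndependent_iff] at hb
  have hre : ∀ x, (g x).re = 0 := by
    refine hb (fun x => (g x).re) ?_
    funext i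
    have h0 := congrFun hg i
    simp only [Finset.sum_apply, Pi.smul_apply, smul_eq_mul] at h0 ⊢
    have h1 := congrArg Complex.re h0
    simpa [Complex.mul_re, iotaC] using h1
  have him : ∀ x, (g x).im = 0 := by
    refine hb (fun x => (g x).im) ?_
    funext i
    have h0 := congrFun hg i
    simp only [Finset.sum_apply, Pi.smul_apply, smul_eq_mul] at h0 ⊢
    have h1 := congrArg Complex.im h0
    simpa [Complex.mul_im, iotaC] using h1
  exact Complex.ext (hre x) (him x)

lemma rank_map_ofReal {m c : ℕ} (A : Matrix (Fin m) (Fin c) ℝ) :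
    (A.map (fun r => (r : ℂ))).rank = A.rank := by
  rw [Matrix.rank_eq_finrank_span_cols, Matrix.rank_eq_finrank_span_cols]
  have hcols : Set.range (A.map (fun r => (r:ℂ))).col = iotaC m '' Set.range A.col := by
    rw [← Set.range_comp]
    rfl
  rw [hcols]
  obtain ⟨b, hbsub, hbspan, hbind⟩ := exists_linearIndependent ℝ (Set.range A.col)
  have hbfin : b.Finite := (Set.finite_range A.col).subset hbsub
  haveI : Fintype b := hbfin.fintype
  haveI : Fintype (iotaC m '' b) := (hbfin.image _).fintype
  have hspaneq : Submodule.span ℂ (iotaC m '' Set.range A.col)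
      = Submodule.span ℂ (iotaC m '' b) := by
    apply le_antisymm
    · rw [Submodule.span_le]
      rintro _ ⟨w, hw, rfl⟩
      exact mem_span_iotaC b w (hbspan ▸ Submodule.subset_span hw)
    · exact Submodule.span_mono (Set.image_mono hbsub)
  rw [hspaneq, ← hbspan]
  have hinj : Set.InjOn (iotaC m) b := (iotaC_injective m).injOn
  have hind' : LinearIndependent ℂ (Subtype.val : (iotaC m '' b) → (Fin m → ℂ)) := by
    exact (linearIndepOn_iff_image hinj).mp (linIndep_iotaC b hbind)
  rw [finrank_span_set_eq_card hbind, finrank_span_set_eq_card hind']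
  rw [Set.toFinset_image]
  rw [Finset.card_image_of_injOn (fun x hx y hy h => hinj (by simpa using hx) (by simpa using hy) h)]

lemma aux_dual {n : ℕ} (u v : Fin n → Fin n → ℤ)
    (hδ : ∀ i j, ∑ m, u i m * v j m = if i = j then (1:ℤ) else 0) (m m' : Fin n) :
    ∑ j, u j m * v j m' = if m = m' then (1:ℤ) else 0 := by
  have hU : (Matrix.of u) * (Matrix.of v).transpose = 1 := by
    ext i j
    simp only [Matrix.mul_apply, Matrix.of_apply, Matrix.transpose_apply, Matrix.one_apply]
    exact hδ i j
  have hV := mul_eq_one_comm.mp hU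
  have h : ((Matrix.of v).transpose * Matrix.of u) m' m
      = (1 : Matrix (Fin n) (Fin n) ℤ) m' m := by
    rw [hV]
  simp only [Matrix.mul_apply, Matrix.of_apply, Matrix.transpose_apply, Matrix.one_apply] at h
  rw [show (if m = m' then (1:ℤ) else 0) = (if m' = m then (1:ℤ) else 0) by
    by_cases hmm : m = m' <;> simp [hmm, eq_comm], ← h]
  apply Finset.sum_congr rfl
  intro j _
  ring

lemma aux_key {n k : ℕ} (u v : Fin n → Fin n → ℤ)
    (hδ : ∀ i j, ∑ m, u i m * v j m = if i = j then (1:ℤ) else 0)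
    (p : Fin k → Fin n → ℤ) (q : Fin (n - k) → Fin n → ℤ)
    (hpq : ∀ (l : Fin k) (i : Fin (n - k)), ∑ m, p l m * q i m = 0)
    (i : Fin (n - k)) (l : Fin k) :
    ∑ j, (∑ m, u j m * q i m) * (∑ m, p l m * v j m) = 0 := by
  have expand : ∀ j : Fin n, (∑ m, u j m * q i m) * (∑ m, p l m * v j m)
      = ∑ m, ∑ m', q i m * p l m' * (u j m * v j m') := by
    intro j
    rw [Finset.sum_mul_sum]
    apply Finset.sum_congr rfl; intro m _
    apply Finset.sum_congr rfl; intro m' _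
    ring
  calc ∑ j, (∑ m, u j m * q i m) * (∑ m, p l m * v j m)
      = ∑ m, ∑ m', q i m * p l m' * (∑ j, u j m * v j m') := by
        simp_rw [expand, Finset.mul_sum]
        rw [Finset.sum_comm]
        apply Finset.sum_congr rfl; intro m _
        rw [Finset.sum_comm]
    _ = ∑ m, q i m * p l m := by
        apply Finset.sum_congr rfl; intro m _
        simp_rw [aux_dual u v hδ, mul_ite, mul_one, mul_zero]
        rw [Finset.sum_ite_eq Finset.univ m (fun m' => q i m * p l m')]
        simp
    _ = 0 := by rw [← hpq l i]; apply Finset.sum_congr rfl; intro m _; ring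

lemma aux_signsplit {n : ℕ} (s : Fin n → ℤ) (d : Fin n → ℂ) :
    (∑ j ∈ univ.filter (fun j => 0 ≤ s j), ((s j).toNat : ℂ) * d j)
      - ∑ j ∈ univ.filter (fun j => s j ≤ 0), ((-s j).toNat : ℂ) * d j
      = ∑ j, (s j : ℂ) * d j := by
  rw [Finset.sum_filter, Finset.sum_filter, ← Finset.sum_sub_distrib]
  apply Finset.sum_congr rfl
  intro j _
  by_cases h1 : 0 ≤ s j <;> by_cases h2 : s j ≤ 0
  · have h0 : s j = 0 := le_antisymm h2 h1
    simp [h0]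
  · have h3 := Int.toNat_of_nonneg h1
    simp only [h1, if_true, h2, if_false]
    rw [sub_zero, show ((s j).toNat : ℂ) = ((s j : ℤ) : ℂ) by
      exact_mod_cast congrArg (fun x : ℤ => (x : ℂ)) h3]
  · have h3 : (0:ℤ) ≤ -s j := by omega
    have h4 := Int.toNat_of_nonneg h3
    simp only [h1, if_false, h2, if_true]
    rw [zero_sub, show (((-s j).toNat) : ℂ) = ((-s j : ℤ) : ℂ) by
      exact_mod_cast congrArg (fun x : ℤ => (x : ℂ)) h4]
    push_cast
    ring
  · omega

lemma aux_sum_sd {n kk : ℕ} (s : Fin n → ℤ) (P : Fin kk → Fin n → ℤ)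
    (hkey : ∀ l, ∑ j, s j * P l j = 0) (Y : Fin kk → ℂ) :
    ∑ j, (s j : ℂ) * (∑ l, (P l j : ℂ) * Y l) = 0 := by
  simp_rw [Finset.mul_sum, ← mul_assoc]
  rw [Finset.sum_comm]
  apply Finset.sum_eq_zero
  intro l _
  rw [← Finset.sum_mul]
  have h0 : (∑ j, (s j : ℂ) * (P l j : ℂ)) = 0 := by
    have h1 := congrArg (fun x : ℤ => (x : ℂ)) (hkey l)
    push_cast at h1
    simpa using h1
  rw [h0, zero_mul]


lemma aux_phase {n kk nk : ℕ} (a : Fin n → ℝ) (v : Fin n → Fin n → ℤ) (p : Fin kk → Fin n → ℤ)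
    (s : Fin nk → Fin n → ℤ)
    (hkey : ∀ i l, ∑ j, s i j * (∑ m, p l m * v j m) = 0)
    (F : (Fin kk → ℂ) → (Fin n → ℂ))
    (hF : ∀ w i, F w i = Complex.exp
      (((∑ m, a m * (v i m : ℝ) : ℝ) : ℂ) + ∑ l, ((∑ m, p l m * v i m : ℤ) : ℂ) * w l))
    (z : Fin n → ℂ) (hz : z ∈ closure (Set.range F)) :
    ∃ t : Fin n → ℂ, (∀ j, t j ≠ 0) ∧
      (∀ i, ∏ j ∈ univ.filter (fun j => 0 ≤ s i j), t j ^ (s i j).toNat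
          = ∏ j ∈ univ.filter (fun j => s i j ≤ 0), t j ^ (-(s i j)).toNat) ∧
      (∀ j, z j = t j * (‖z j‖ : ℂ)) := by
  classical
  obtain ⟨zs, hzs, hlim⟩ := mem_closure_iff_seq_limit.mp hz
  choose w hw using hzs
  set A : Fin n → ℝ := fun j => ∑ m, a m * (v j m : ℝ) with hA
  set P : Fin kk → Fin n → ℤ := fun l j => ∑ m, p l m * v j m with hP
  set cc : (Fin kk → ℂ) → Fin n → ℂ :=
    fun W j => ((A j : ℝ) : ℂ) + ∑ l, ((P l j : ℤ) : ℂ) * W l with hcc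
  have hFc : ∀ W j, F W j = Complex.exp (cc W j) := fun W j => hF W j
  set ts : ℕ → Fin n → ℂ := fun σ j => Complex.exp (cc (w σ) j - ((cc (w σ) j).re : ℂ)) with hts
  have hd : ∀ (W : Fin kk → ℂ) j, cc W j - ((cc W j).re : ℂ)
      = ∑ l, ((P l j : ℤ) : ℂ) * (W l - ((W l).re : ℂ)) := by
    intro W j
    have hre : (cc W j).re = A j + ∑ l, (P l j : ℝ) * (W l).re := by
      simp [hcc, Complex.add_re, Complex.re_sum, Complex.mul_re]
    rw [hre, hcc]
    push_cast
    simp only [mul_sub, Finset.sum_sub_distrib]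
    ring
  have habs : ∀ σ j, ‖ts σ j‖ = 1 := by
    intro σ j; rw [hts]; simp [Complex.norm_exp]
  have hprodgen : ∀ (τ : Fin n → ℂ) (S : Finset (Fin n)) (e : Fin n → ℕ),
      (∏ j ∈ S, Complex.exp (τ j) ^ e j) = Complex.exp (∑ j ∈ S, (e j : ℂ) * τ j) := by
    intro τ S e
    rw [Complex.exp_sum]
    apply Finset.prod_congr rfl; intro j _
    rw [← Complex.exp_nat_mul]
  have hprod : ∀ σ i, ∏ j ∈ univ.filter (fun j => 0 ≤ s i j), ts σ j ^ (s i j).toNat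
      = ∏ j ∈ univ.filter (fun j => s i j ≤ 0), ts σ j ^ (-(s i j)).toNat := by
    intro σ i
    simp only [hts]
    rw [hprodgen, hprodgen]
    congr 1
    have hzero : ∑ j, (s i j : ℂ) * (cc (w σ) j - ((cc (w σ) j).re : ℂ)) = 0 := by
      simp_rw [hd]
      exact aux_sum_sd (s i) P (fun l => hkey i l) _
    have hsplit := aux_signsplit (s i) (fun j => cc (w σ) j - ((cc (w σ) j).re : ℂ))
    exact sub_eq_zero.mp (hsplit.trans hzero)
  set K : Set (Fin n → ℂ) := {t | (∀ j, ‖t j‖ = 1) ∧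
    ∀ i, ∏ j ∈ univ.filter (fun j => 0 ≤ s i j), t j ^ (s i j).toNat
        = ∏ j ∈ univ.filter (fun j => s i j ≤ 0), t j ^ (-(s i j)).toNat} with hK
  have hKclosed : IsClosed K := by
    have : K = (⋂ j, {t : Fin n → ℂ | ‖t j‖ = 1}) ∩
        ⋂ i, {t : Fin n → ℂ | ∏ j ∈ univ.filter (fun j => 0 ≤ s i j), t j ^ (s i j).toNat
          = ∏ j ∈ univ.filter (fun j => s i j ≤ 0), t j ^ (-(s i j)).toNat} := by
      ext τ; simp [hK, Set.mem_iInter]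
    rw [this]
    refine IsClosed.inter (isClosed_iInter fun j => isClosed_eq
      (continuous_norm.comp (continuous_apply j)) continuous_const)
      (isClosed_iInter fun i => isClosed_eq ?_ ?_)
    · exact continuous_finset_prod _ (fun j _ => (continuous_apply j).pow _)
    · exact continuous_finset_prod _ (fun j _ => (continuous_apply j).pow _)
  have hKsub : K ⊆ Metric.closedBall 0 1 := by
    intro t ht
    rw [Metric.mem_closedBall, dist_zero_right]
    rw [pi_norm_le_iff_of_nonneg zero_le_one]
    intro j
    rw [ht.1 j]
  have hKcomp : IsCompact K := (isCompact_closedBall (0 : Fin n → ℂ) 1).of_isClosed_subset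
    hKclosed hKsub
  obtain ⟨t, htK, φ, hφ, hφlim⟩ := hKcomp.tendsto_subseq (fun σ => ⟨habs σ, hprod σ⟩ : ∀ σ, ts σ ∈ K)
  have htnz : ∀ j, t j ≠ 0 := by
    intro j h0
    have := htK.1 j
    rw [h0] at this
    simp at this
  refine ⟨t, htnz, htK.2, ?_⟩
  intro j
  have hfac : ∀ σ, zs σ j = ts σ j * ((‖zs σ j‖ : ℝ) : ℂ) := by
    intro σ
    conv_lhs => rw [← hw σ]
    rw [← hw σ, hFc, hts]
    simp only
    rw [Complex.norm_exp, Complex.ofReal_exp, ← Complex.exp_add]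
    congr 1
    ring
  have h1 : Filter.Tendsto (fun σ => zs (φ σ) j) Filter.atTop (nhds (z j)) :=
    ((continuous_apply j).tendsto z).comp (hlim.comp (hφ.tendsto_atTop))
  have h2 : Filter.Tendsto (fun σ => ts (φ σ) j * ((‖zs (φ σ) j‖ : ℝ) : ℂ))
      Filter.atTop (nhds (t j * ((‖z j‖ : ℝ) : ℂ))) := by
    apply Filter.Tendsto.mul
    · exact ((continuous_apply j).tendsto t).comp hφlim
    · exact (Complex.continuous_ofReal.tendsto _).comp ((continuous_norm.tendsto _).comp h1)
  have heq : (fun σ => zs (φ σ) j) = fun σ => ts (φ σ) j * ((‖zs (φ σ) j‖ : ℝ) : ℂ) :=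
    funext fun σ => hfac (φ σ)
  rw [heq] at h1
  exact tendsto_nhds_unique h1 h2

/-- main theorem: For every `z` in the closure of the local model `C_λ(V)` of
the complex subtorus and every `ξ` with `|z j| = e * L j ξ` for all `j`, the rank of the
complex Jacobian `Df(z)` of the chart defining equations `f i` equals the rank of the real
Jacobian `Dg(ξ)` of the defining equations `g i` of `D̄(V)` in the Delzant polytope. -/
theorem stmt13 (n k : ℕ)
    (u v : Fin n → Fin n → ℤ)
    (hδ : ∀ i j, ∑ m, u i m * v j m = if i = j then (1 : ℤ) else 0)
    (p : Fin k → Fin n → ℤ) (q : Fin (n - k) → Fin n → ℤ)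
    (hpq : ∀ (l : Fin k) (i : Fin (n - k)), ∑ m, p l m * q i m = 0)
    (a : Fin n → ℝ) (κ : Fin n → ℝ)
    (L : Fin n → (Fin n → ℝ) → ℝ)
    (hL : ∀ j ξ, L j ξ = ∑ m, (u j m : ℝ) * ξ m - κ j)
    (f : Fin (n - k) → (Fin n → ℂ) → ℂ)
    (hf : ∀ i z, f i z =
      (∏ j ∈ univ.filter fun j => 0 ≤ ∑ m, u j m * q i m,
        z j ^ (∑ m, u j m * q i m).toNat)
      - (Real.exp (∑ m, a m * (q i m : ℝ)) : ℂ) *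
        ∏ j ∈ univ.filter fun j => (∑ m, u j m * q i m) ≤ 0,
          z j ^ (-∑ m, u j m * q i m).toNat)
    (g : Fin (n - k) → (Fin n → ℝ) → ℝ)
    (hg : ∀ i ξ, g i ξ =
      (∏ j ∈ univ.filter fun j => 0 ≤ ∑ m, u j m * q i m,
        (Real.exp 1 * L j ξ) ^ (∑ m, u j m * q i m).toNat)
      - Real.exp (∑ m, a m * (q i m : ℝ)) *
        ∏ j ∈ univ.filter fun j => (∑ m, u j m * q i m) ≤ 0,
          (Real.exp 1 * L j ξ) ^ (-∑ m, u j m * q i m).toNat)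
    (Df : (Fin n → ℂ) → Matrix (Fin (n - k)) (Fin n) ℂ)
    (hDf : ∀ z, Df z = Matrix.of fun i j => fderiv ℂ (f i) z (Pi.single j 1))
    (Dg : (Fin n → ℝ) → Matrix (Fin (n - k)) (Fin n) ℝ)
    (hDg : ∀ ξ, Dg ξ = Matrix.of fun i j => fderiv ℝ (g i) ξ (Pi.single j 1))
    (F : (Fin k → ℂ) → (Fin n → ℂ))
    (hF : ∀ w i, F w i = Complex.exp
      (((∑ m, a m * (v i m : ℝ) : ℝ) : ℂ) + ∑ l, ((∑ m, p l m * v i m : ℤ) : ℂ) * w l)) :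
    ∀ z ∈ closure (Set.range F), ∀ ξ : Fin n → ℝ,
      (∀ j, ‖z j‖ = Real.exp 1 * L j ξ) →
      (Df z).rank = (Dg ξ).rank := by
  classical
  intro z hz ξ hξ
  have hkey : ∀ (i : Fin (n - k)) (l : Fin k),
      ∑ j, (∑ m, u j m * q i m) * (∑ m, p l m * v j m) = 0 :=
    fun i l => aux_key u v hδ p q hpq i l
  obtain ⟨t, htnz, htprod, htz⟩ :=
    aux_phase a v p (fun i j => ∑ m, u j m * q i m) hkey F hF z hz
  -- the real vector of boundary coordinates
  set xr : Fin n → ℝ := fun j => Real.exp 1 * L j ξ with hxr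
  have hzx : z = fun j => t j * ((xr j : ℝ) : ℂ) := by
    funext j
    rw [htz j, hξ j]
  -- entry formula for Df
  have hDf2 : Df z = Matrix.of (fun i j =>
      dent (univ.filter fun j' => 0 ≤ ∑ m, u j' m * q i m)
        (fun j' => (∑ m, u j' m * q i m).toNat) z j
      - (Real.exp (∑ m, a m * (q i m : ℝ)) : ℂ) *
        dent (univ.filter fun j' => (∑ m, u j' m * q i m) ≤ 0)
          (fun j' => (-∑ m, u j' m * q i m).toNat) z j) := by
    rw [hDf]
    ext i j
    simp only [Matrix.of_apply]
    have hfi : f i = fun y : Fin n → ℂ =>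
        (∏ j' ∈ univ.filter fun j' => 0 ≤ ∑ m, u j' m * q i m,
          y j' ^ (∑ m, u j' m * q i m).toNat)
        - (Real.exp (∑ m, a m * (q i m : ℝ)) : ℂ) *
          ∏ j' ∈ univ.filter fun j' => (∑ m, u j' m * q i m) ≤ 0,
            y j' ^ (-∑ m, u j' m * q i m).toNat :=
      funext fun y => hf i y
    rw [hfi]
    exact aux_entry_f _ _ _ _ _ z j
  -- entry formula for Dg
  have hDg2 : Dg ξ = (Matrix.of fun i j =>
      dent (univ.filter fun j' => 0 ≤ ∑ m, u j' m * q i m)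
        (fun j' => (∑ m, u j' m * q i m).toNat) xr j
      - Real.exp (∑ m, a m * (q i m : ℝ)) *
        dent (univ.filter fun j' => (∑ m, u j' m * q i m) ≤ 0)
          (fun j' => (-∑ m, u j' m * q i m).toNat) xr j) *
      (Matrix.of fun j m => Real.exp 1 * (u j m : ℝ)) := by
    rw [hDg]
    ext i m
    simp only [Matrix.of_apply, Matrix.mul_apply]
    have hgi : g i = fun y : Fin n → ℝ =>
        (∏ j' ∈ univ.filter fun j' => 0 ≤ ∑ m, u j' m * q i m,
          (Real.exp 1 * ((∑ m', (u j' m' : ℝ) * y m') - κ j')) ^ (∑ m, u j' m * q i m).toNat)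
        - Real.exp (∑ m, a m * (q i m : ℝ)) *
          ∏ j' ∈ univ.filter fun j' => (∑ m, u j' m * q i m) ≤ 0,
            (Real.exp 1 * ((∑ m', (u j' m' : ℝ) * y m') - κ j')) ^ (-∑ m, u j' m * q i m).toNat := by
      funext y
      rw [hg i y]
      simp_rw [hL]
    rw [hgi, aux_entry_g]
    have hxfun : (fun j'' => Real.exp 1 * ((∑ m', (u j'' m' : ℝ) * ξ m') - κ j'')) = xr := by
      funext j''
      show Real.exp 1 * ((∑ m', (u j'' m' : ℝ) * ξ m') - κ j'') = Real.exp 1 * L j'' ξ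
      rw [hL]
    rw [hxfun]
  -- diagonal factorization of Df
  have hfac : Matrix.of (fun i j =>
      dent (univ.filter fun j' => 0 ≤ ∑ m, u j' m * q i m)
        (fun j' => (∑ m, u j' m * q i m).toNat) z j
      - (Real.exp (∑ m, a m * (q i m : ℝ)) : ℂ) *
        dent (univ.filter fun j' => (∑ m, u j' m * q i m) ≤ 0)
          (fun j' => (-∑ m, u j' m * q i m).toNat) z j)
      = Matrix.diagonal (fun i => ∏ j' ∈ univ.filter fun j'' => 0 ≤ ∑ m, u j'' m * q i m,
          t j' ^ (∑ m, u j' m * q i m).toNat)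
        * Matrix.of (fun i j =>
          dent (univ.filter fun j' => 0 ≤ ∑ m, u j' m * q i m)
            (fun j' => (∑ m, u j' m * q i m).toNat) (fun j' => ((xr j' : ℝ) : ℂ)) j
          - (Real.exp (∑ m, a m * (q i m : ℝ)) : ℂ) *
            dent (univ.filter fun j' => (∑ m, u j' m * q i m) ≤ 0)
              (fun j' => (-∑ m, u j' m * q i m).toNat) (fun j' => ((xr j' : ℝ) : ℂ)) j)
        * Matrix.diagonal (fun j => (t j)⁻¹) := by
    ext i j
    rw [Matrix.mul_diagonal, Matrix.diagonal_mul]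
    simp only [Matrix.of_apply]
    rw [hzx]
    rw [dent_mul _ _ t _ htnz j, dent_mul _ _ t _ htnz j]
    rw [show (∏ j' ∈ univ.filter fun j'' => (∑ m, u j'' m * q i m) ≤ 0,
        t j' ^ (-∑ m, u j' m * q i m).toNat)
      = ∏ j' ∈ univ.filter fun j'' => 0 ≤ ∑ m, u j'' m * q i m,
        t j' ^ (∑ m, u j' m * q i m).toNat from (htprod i).symm]
    ring
  -- Mc is the complexification of Mr
  have hMcmap : (Matrix.of (fun i j =>
      dent (univ.filter fun j' => 0 ≤ ∑ m, u j' m * q i m)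
        (fun j' => (∑ m, u j' m * q i m).toNat) (fun j' => ((xr j' : ℝ) : ℂ)) j
      - (Real.exp (∑ m, a m * (q i m : ℝ)) : ℂ) *
        dent (univ.filter fun j' => (∑ m, u j' m * q i m) ≤ 0)
          (fun j' => (-∑ m, u j' m * q i m).toNat) (fun j' => ((xr j' : ℝ) : ℂ)) j))
      = (Matrix.of fun i j =>
          dent (univ.filter fun j' => 0 ≤ ∑ m, u j' m * q i m)
            (fun j' => (∑ m, u j' m * q i m).toNat) xr j
          - Real.exp (∑ m, a m * (q i m : ℝ)) *
            dent (univ.filter fun j' => (∑ m, u j' m * q i m) ≤ 0)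
              (fun j' => (-∑ m, u j' m * q i m).toNat) xr j).map (fun r => (r : ℂ)) := by
    ext i j
    simp only [Matrix.map_apply, Matrix.of_apply]
    rw [Complex.ofReal_sub, Complex.ofReal_mul, dent_map, dent_map]
  -- invertibility of the scaled dual matrix W
  have hWunit : IsUnit (Matrix.of fun j m => Real.exp 1 * (u j m : ℝ)).det := by
    have hUV : (Matrix.of fun j m => ((u j m : ℤ) : ℝ))
        * (Matrix.of fun m j => ((v j m : ℤ) : ℝ)) = 1 := by
      ext i j
      simp only [Matrix.mul_apply, Matrix.of_apply, Matrix.one_apply]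
      have h0 := hδ i j
      exact_mod_cast h0
    have hdetU : IsUnit (Matrix.of fun j m => ((u j m : ℤ) : ℝ)).det :=
      Matrix.isUnit_det_of_right_inverse hUV
    have hW : (Matrix.of fun j m => Real.exp 1 * (u j m : ℝ))
        = Real.exp 1 • (Matrix.of fun j m => ((u j m : ℤ) : ℝ)) := by
      ext j m
      simp [Matrix.smul_apply]
    rw [hW, Matrix.det_smul, Fintype.card_fin]
    exact (IsUnit.pow n (isUnit_iff_ne_zero.2 (Real.exp_ne_zero 1))).mul hdetU
  -- assemble the rank chain
  rw [hDf2, hDg2, hfac, hMcmap]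
  rw [rank_diag_mul_mul_diag _ _
    (fun i => Finset.prod_ne_zero_iff.2 fun j' _ => pow_ne_zero _ (htnz j'))
    (fun j => inv_ne_zero (htnz j)) _]
  rw [rank_map_ofReal]
  rw [Matrix.rank_mul_eq_left_of_isUnit_det _ _ hWunit]
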